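/- arXiv:1406.7858 — 7 statements merged into one kernel-verified Lean document; each statement's English description precedes it below -/
import Mathlib

section
/- Let M ≥ 2 and k₂ ≥ 1 be integers, let γ_D > 0, γ_E > 0, and ξ > 1 be real numbers. Then ∫₀^∞ [1 − e^{−(ξ(1+y)−1)/γ_D}]^{M+k₂} · ((Mk₂+1)/γ_E) e^{−y/γ_E} [1 − e^{−y/γ_E}]^{Mk₂} dy = (Mk₂+1) · Σ_{i=0}^{M+k₂} C(M+k₂, i) (−1)^i e^{−(ξ−1)i/γ_D} · B((ξ γ_E i + γ_D)/γ_D, Mk₂+1), where C(n,i) is the binomial coefficient and B is the Beta function. (This is Theorem 1: the secrecy outage probability of the M-source GNC scheme with partial CSI, computed using the high-SNR approximations F_{γD}(x) = (1−e^{−x/γ_D})^{M+k₂} for the legitimate destination's SNR CDF and p_{γE}(y) = ((Mk₂+1)/γ_E) e^{−y/γ_E}(1−e^{−y/γ_E})^{Mk₂} for the eavesdropper's SNR density, with ξ = 2^{R_s/R_GNC}.) -/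
open MeasureTheory Real Filter Topology Finset

/-- The Beta function `B(x,y) = ∫₀¹ t^(x-1) (1-t)^(y-1) dt`. -/
noncomputable def Beta (x y : ℝ) : ℝ := ∫ t in (0:ℝ)..1, t ^ (x - 1) * (1 - t) ^ (y - 1)

/-- Binomial expansion of `(1 - A)^N`. -/
lemma one_sub_pow_eq_sum (A : ℝ) (N : ℕ) :
    (1 - A) ^ N = ∑ i ∈ Finset.range (N + 1), (N.choose i : ℝ) * (-1) ^ i * A ^ i := by
  rw [sub_eq_neg_add, Commute.add_pow (Commute.all _ _)]
  refine Finset.sum_congr rfl fun i _ => ?_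
  rw [neg_pow]
  ring

/-- `∫_0^∞ e^{-b y} dy = 1/b`. -/
lemma integral_exp_neg_mul_Ioi {b : ℝ} (hb : 0 < b) :
    ∫ y in Set.Ioi (0:ℝ), Real.exp (-b * y) = 1 / b := by
  have hderiv : ∀ y ∈ Set.Ici (0:ℝ),
      HasDerivAt (fun y => -Real.exp (-b * y) / b) (Real.exp (-b * y)) y := by
    intro y _
    have h1 : HasDerivAt (fun y : ℝ => -b * y) (-b) y := by
      simpa using (hasDerivAt_id y).const_mul (-b)
    have h2 := h1.exp.neg.div_const b
    refine h2.congr_deriv ?_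
    rw [div_eq_iff hb.ne']
    ring
  have htend : Tendsto (fun y => -Real.exp (-b * y) / b) atTop (𝓝 0) := by
    have : Tendsto (fun y => -Real.exp (-b * y) / b) atTop (𝓝 (-0 / b)) := by
      refine Tendsto.div_const (Tendsto.neg ?_) _
      exact tendsto_exp_atBot.comp (tendsto_id.const_mul_atTop_of_neg (by linarith))
    simpa using this
  have := integral_Ioi_of_hasDerivAt_of_tendsto' hderiv
    (exp_neg_integrableOn_Ioi 0 hb) htend
  simp only [mul_zero, Real.exp_zero] at this
  rw [this]
  field_simp
  ring

open intervalIntegral in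
/-- Beta function with natural second argument as a finite sum. -/
lemma beta_nat_sum (x : ℝ) (hx : 1 ≤ x) (m : ℕ) :
    Beta x ((m : ℝ) + 1) =
      ∑ j ∈ Finset.range (m + 1), (m.choose j : ℝ) * (-1) ^ j * (1 / (x + j)) := by
  have hx0 : (0:ℝ) < x := by linarith
  unfold Beta
  rw [integral_of_le zero_le_one]
  have hcong : ∀ t ∈ Set.Ioc (0:ℝ) 1,
      t ^ (x - 1) * (1 - t) ^ ((m : ℝ) + 1 - 1) =
        ∑ j ∈ Finset.range (m + 1),
          (m.choose j : ℝ) * (-1) ^ j * t ^ (x - 1 + (j : ℝ)) := by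
    intro t ht
    have ht0 : (0:ℝ) < t := ht.1
    have : ((m : ℝ) + 1 - 1) = ((m : ℕ) : ℝ) := by ring
    rw [this, Real.rpow_natCast, one_sub_pow_eq_sum, Finset.mul_sum]
    refine Finset.sum_congr rfl fun j _ => ?_
    rw [← Real.rpow_natCast t j, Real.rpow_add ht0]
    ring
  rw [setIntegral_congr_fun measurableSet_Ioc hcong]
  have hint : ∀ j ∈ Finset.range (m + 1),
      IntegrableOn (fun t : ℝ => (m.choose j : ℝ) * (-1) ^ j * t ^ (x - 1 + (j : ℝ)))
        (Set.Ioc (0:ℝ) 1) := by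
    intro j _
    have h1 : -1 < x - 1 + (j : ℝ) := by
      have : (0:ℝ) ≤ (j : ℝ) := Nat.cast_nonneg j
      linarith
    have := (intervalIntegrable_rpow' h1 (a := (0:ℝ)) (b := 1))
    rw [intervalIntegrable_iff_integrableOn_Ioc_of_le zero_le_one] at this
    exact this.const_mul _
  rw [MeasureTheory.integral_finset_sum _ hint]
  refine Finset.sum_congr rfl fun j _ => ?_
  rw [MeasureTheory.integral_const_mul]
  congr 1
  have h1 : -1 < x - 1 + (j : ℝ) := by
    have : (0:ℝ) ≤ (j : ℝ) := Nat.cast_nonneg j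
    linarith
  rw [← integral_of_le zero_le_one,
    integral_rpow (Or.inl h1)]
  have hxj : (0:ℝ) < x + j := by
    have : (0:ℝ) ≤ (j : ℝ) := Nat.cast_nonneg j
    linarith
  have h2 : x - 1 + (j : ℝ) + 1 = x + j := by ring
  rw [h2, Real.one_rpow, Real.zero_rpow hxj.ne']
  ring

/-- Theorem 1: the secrecy outage probability of the `M`-source GNC scheme with
partial CSI equals `(Mk₂+1) Σᵢ C(M+k₂, i) (-1)^i e^{-(ξ-1)i/γ_D} B((ξγ_E i + γ_D)/γ_D, Mk₂+1)`. -/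
theorem gnc_sop_partial_csi (M k₂ : ℕ) (hM : 2 ≤ M) (hk₂ : 1 ≤ k₂)
    (γD γE ξ : ℝ) (hγD : 0 < γD) (hγE : 0 < γE) (hξ : 1 < ξ) :
    ∫ y in Set.Ioi (0:ℝ),
        (1 - Real.exp (-(ξ * (1 + y) - 1) / γD)) ^ (M + k₂) *
          (((M * k₂ + 1 : ℕ) : ℝ) / γE * Real.exp (-y / γE) *
            (1 - Real.exp (-y / γE)) ^ (M * k₂)) =
      ((M * k₂ + 1 : ℕ) : ℝ) *
        ∑ i ∈ Finset.range (M + k₂ + 1),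
          ((M + k₂).choose i : ℝ) * (-1 : ℝ) ^ i *
            Real.exp (-((ξ - 1) / γD) * (i : ℝ)) *
            Beta ((ξ * γE * (i : ℝ) + γD) / γD) ((M * k₂ + 1 : ℕ) : ℝ) := by
  set n := M + k₂ with hn
  set m := M * k₂ with hm
  have hγD' : γD ≠ 0 := hγD.ne'
  have hγE' : γE ≠ 0 := hγE.ne'
  -- the combined decay rate for term (i, j)
  set b : ℕ → ℕ → ℝ := fun i j => ξ * i / γD + ((j : ℝ) + 1) / γE with hb
  have hbpos : ∀ i j : ℕ, 0 < b i j := by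
    intro i j
    have h1 : (0:ℝ) ≤ ξ * i / γD := by positivity
    have h2 : (0:ℝ) < ((j : ℝ) + 1) / γE := by positivity
    simp only [hb]
    linarith
  -- the constant coefficient for term (i, j)
  set c : ℕ → ℕ → ℝ := fun i j =>
    (n.choose i : ℝ) * (-1) ^ i * Real.exp (-((ξ - 1) / γD) * (i : ℝ)) *
      (((m + 1 : ℕ) : ℝ) / γE) * ((m.choose j : ℝ) * (-1) ^ j) with hc
  -- Step 1: pointwise expansion of the integrand
  have key : ∀ y : ℝ,
      (1 - Real.exp (-(ξ * (1 + y) - 1) / γD)) ^ n *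
          (((m + 1 : ℕ) : ℝ) / γE * Real.exp (-y / γE) *
            (1 - Real.exp (-y / γE)) ^ m) =
        ∑ i ∈ Finset.range (n + 1), ∑ j ∈ Finset.range (m + 1),
          c i j * Real.exp (-(b i j) * y) := by
    intro y
    rw [one_sub_pow_eq_sum, one_sub_pow_eq_sum (Real.exp (-y / γE)) m, Finset.mul_sum,
      Finset.sum_mul_sum]
    refine Finset.sum_congr rfl fun i _ => Finset.sum_congr rfl fun j _ => ?_
    rw [← Real.exp_nat_mul, ← Real.exp_nat_mul]
    have e1 : (n.choose i : ℝ) * (-1) ^ i * Real.exp ((i : ℝ) * (-(ξ * (1 + y) - 1) / γD)) *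
        (((m + 1 : ℕ) : ℝ) / γE * Real.exp (-y / γE) *
          ((m.choose j : ℝ) * (-1) ^ j * Real.exp ((j : ℝ) * (-y / γE)))) =
        ((n.choose i : ℝ) * (-1) ^ i * (((m + 1 : ℕ) : ℝ) / γE) *
          ((m.choose j : ℝ) * (-1) ^ j)) *
          (Real.exp ((i : ℝ) * (-(ξ * (1 + y) - 1) / γD)) *
            (Real.exp (-y / γE) * Real.exp ((j : ℝ) * (-y / γE)))) := by ring
    rw [e1, ← Real.exp_add, ← Real.exp_add]
    have e2 : (i : ℝ) * (-(ξ * (1 + y) - 1) / γD) + (-y / γE + (j : ℝ) * (-y / γE)) =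
        -((ξ - 1) / γD) * (i : ℝ) + -(b i j) * y := by
      simp only [hb]
      field_simp
      ring
    rw [e2, Real.exp_add]
    simp only [hc]
    ring
  -- Step 2: compute the integral
  have hLHS : (∫ y in Set.Ioi (0:ℝ),
      (1 - Real.exp (-(ξ * (1 + y) - 1) / γD)) ^ n *
        (((m + 1 : ℕ) : ℝ) / γE * Real.exp (-y / γE) *
          (1 - Real.exp (-y / γE)) ^ m)) =
      ∑ i ∈ Finset.range (n + 1), ∑ j ∈ Finset.range (m + 1), c i j * (1 / b i j) := by
    rw [setIntegral_congr_fun measurableSet_Ioi fun y _ => key y]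
    rw [MeasureTheory.integral_finset_sum _ (fun i _ => ?_)]
    · refine Finset.sum_congr rfl fun i _ => ?_
      rw [MeasureTheory.integral_finset_sum _ (fun j _ => ?_)]
      · refine Finset.sum_congr rfl fun j _ => ?_
        rw [MeasureTheory.integral_const_mul, integral_exp_neg_mul_Ioi (hbpos i j)]
      · exact (exp_neg_integrableOn_Ioi 0 (hbpos i j)).const_mul _
    · exact MeasureTheory.integrable_finset_sum _
        (fun j _ => (exp_neg_integrableOn_Ioi 0 (hbpos i j)).const_mul _)
  rw [hLHS]
  -- Step 3: rewrite the Beta functions as sums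
  have hbeta : ∀ i : ℕ,
      Beta ((ξ * γE * (i : ℝ) + γD) / γD) ((m + 1 : ℕ) : ℝ) =
        ∑ j ∈ Finset.range (m + 1),
          (m.choose j : ℝ) * (-1) ^ j * (1 / ((ξ * γE * (i : ℝ) + γD) / γD + j)) := by
    intro i
    have hx : (1:ℝ) ≤ (ξ * γE * (i : ℝ) + γD) / γD := by
      rw [le_div_iff₀ hγD]
      have : (0:ℝ) ≤ ξ * γE * (i : ℝ) := by positivity
      linarith
    have hcast : ((m + 1 : ℕ) : ℝ) = (m : ℝ) + 1 := by push_cast; ring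
    rw [hcast, beta_nat_sum _ hx m]
  conv_rhs => rw [Finset.mul_sum]
  refine Finset.sum_congr rfl fun i _ => ?_
  rw [hbeta i, Finset.mul_sum, Finset.mul_sum]
  refine Finset.sum_congr rfl fun j _ => ?_
  -- Step 4: termwise identity
  have hxj : (0:ℝ) < (ξ * γE * (i : ℝ) + γD) / γD + j := by
    have h1 : (0:ℝ) ≤ ξ * γE * (i : ℝ) := by positivity
    have h2 : (0:ℝ) < (ξ * γE * (i : ℝ) + γD) / γD := by positivity
    have h3 : (0:ℝ) ≤ (j : ℝ) := Nat.cast_nonneg j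
    linarith
  have hbγ : b i j * γE = (ξ * γE * (i : ℝ) + γD) / γD + j := by
    simp only [hb]
    field_simp
    ring
  have h1 : (1:ℝ) / b i j = γE * (1 / (b i j * γE)) := by
    field_simp
  rw [hbγ] at h1
  rw [h1]
  simp only [hc]
  field_simp
end

section
/- Let M ≥ 2 and k₂ ≥ 1 be integers, let γ_E > 0 and ξ > 1 be real numbers, and for γ > 0 define S(γ) = ∫₀^∞ [1 − e^{−(ξ(1+y)−1)/γ}]^{M+k₂} · ((Mk₂+1)/γ_E) e^{−y/γ_E} [1 − e^{−y/γ_E}]^{Mk₂} dy. Then the diversity order of this secrecy outage probability is M + k₂, i.e., lim_{γ → ∞} (−log S(γ))/(log γ) = M + k₂. (This is Corollary 1: the diversity order of the M-source GNC scheme with parameters (k₁,k₂) is not reduced due to secrecy constraints and remains M + k₂.) -/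
open MeasureTheory Real Filter Topology

private lemma one_sub_exp_neg_le (t : ℝ) : 1 - Real.exp (-t) ≤ t := by
  nlinarith [Real.add_one_le_exp (-t)]

private lemma div3_le_one_sub_exp_neg {t : ℝ} (h0 : 0 ≤ t) (h1 : t ≤ 1) :
    t / 3 ≤ 1 - Real.exp (-t) := by
  have h2 : t + 1 ≤ Real.exp t := Real.add_one_le_exp t
  have hA : Real.exp (-1) ≤ Real.exp (-t) := Real.exp_le_exp.2 (by linarith)
  have hB : Real.exp (-t) * Real.exp t = 1 := by
    rw [← Real.exp_add]; simp
  have hd9 := Real.exp_one_lt_d9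
  have hpos := Real.exp_pos (1 : ℝ)
  have hC : (1 : ℝ) / 3 ≤ Real.exp (-1) := by
    rw [Real.exp_neg]
    rw [le_inv_comm₀ (by norm_num) hpos]
    norm_num at hd9 ⊢
    linarith
  nlinarith [Real.exp_pos (-t), mul_le_mul_of_nonneg_right hA h0,
    mul_le_mul_of_nonneg_right hC h0]

/-- The integrand of the secrecy outage probability. -/
noncomputable def gncF (M k₂ : ℕ) (γE ξ : ℝ) (γ y : ℝ) : ℝ :=
  (1 - Real.exp (-(ξ * (1 + y) - 1) / γ)) ^ (M + k₂) *
    (((M * k₂ + 1 : ℕ) : ℝ) / γE * Real.exp (-y / γE) *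
      (1 - Real.exp (-y / γE)) ^ (M * k₂))

section aux

variable {M k₂ : ℕ} {γE ξ : ℝ}

private lemma gncF_nonneg (hγE : 0 < γE) (hξ : 1 < ξ) {γ y : ℝ} (hγ : 0 < γ)
    (hy : 0 ≤ y) : 0 ≤ gncF M k₂ γE ξ γ y := by
  unfold gncF
  have h1 : Real.exp (-(ξ * (1 + y) - 1) / γ) ≤ 1 := by
    rw [Real.exp_le_one_iff]
    have : 0 ≤ ξ * (1 + y) - 1 := by nlinarith
    rw [neg_div]
    simp only [neg_nonpos]
    positivity
  have h2 : Real.exp (-y / γE) ≤ 1 := by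
    rw [Real.exp_le_one_iff, neg_div]
    simp only [neg_nonpos]
    positivity
  have hb0 : 0 ≤ 1 - Real.exp (-(ξ * (1 + y) - 1) / γ) := by linarith
  have hB0 : 0 ≤ 1 - Real.exp (-y / γE) := by linarith
  have hc : (0:ℝ) ≤ ((M * k₂ + 1 : ℕ) : ℝ) / γE := by positivity
  exact mul_nonneg (pow_nonneg hb0 _)
    (mul_nonneg (mul_nonneg hc (Real.exp_pos _).le) (pow_nonneg hB0 _))

/-- Pointwise upper bound: `gncF γ y ≤ (D / γ^(M+k₂)) * exp (-(1/(2γE)) y)`. -/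
private lemma gncF_le (hγE : 0 < γE) (hξ : 1 < ξ) {γ y : ℝ} (hγ : 0 < γ) (hy : 0 ≤ y) :
    gncF M k₂ γE ξ γ y ≤
      (ξ ^ (M + k₂) * (2 * γE) ^ (M + k₂) * ((M + k₂).factorial : ℝ) *
          Real.exp (1 / (2 * γE)) * (((M * k₂ + 1 : ℕ) : ℝ) / γE)) / γ ^ (M + k₂) *
        Real.exp (-(1 / (2 * γE)) * y) := by
  have hξ0 : (0:ℝ) < ξ := by linarith
  have hc : (0:ℝ) ≤ ((M * k₂ + 1 : ℕ) : ℝ) / γE := by positivity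
  have ht0 : 0 ≤ ξ * (1 + y) - 1 := by nlinarith
  have hb0 : 0 ≤ 1 - Real.exp (-(ξ * (1 + y) - 1) / γ) := by
    have : Real.exp (-(ξ * (1 + y) - 1) / γ) ≤ 1 := by
      rw [Real.exp_le_one_iff, neg_div]; simp only [neg_nonpos]; positivity
    linarith
  have hb1 : 1 - Real.exp (-(ξ * (1 + y) - 1) / γ) ≤ ξ * (1 + y) / γ := by
    have h := one_sub_exp_neg_le ((ξ * (1 + y) - 1) / γ)
    rw [← neg_div] at h
    have : (ξ * (1 + y) - 1) / γ ≤ ξ * (1 + y) / γ := by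
      gcongr
      linarith
    linarith
  have hB1 : 1 - Real.exp (-y / γE) ≤ 1 := by
    have := Real.exp_pos (-y / γE); linarith
  have hB0 : 0 ≤ 1 - Real.exp (-y / γE) := by
    have : Real.exp (-y / γE) ≤ 1 := by
      rw [Real.exp_le_one_iff, neg_div]; simp only [neg_nonpos]; positivity
    linarith
  have step1 : gncF M k₂ γE ξ γ y ≤
      (ξ * (1 + y) / γ) ^ (M + k₂) *
        (((M * k₂ + 1 : ℕ) : ℝ) / γE * Real.exp (-y / γE)) := by
    unfold gncF
    have hp : (1 - Real.exp (-(ξ * (1 + y) - 1) / γ)) ^ (M + k₂) ≤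
        (ξ * (1 + y) / γ) ^ (M + k₂) := pow_le_pow_left₀ hb0 hb1 _
    have hq : ((M * k₂ + 1 : ℕ) : ℝ) / γE * Real.exp (-y / γE) *
        (1 - Real.exp (-y / γE)) ^ (M * k₂) ≤
        ((M * k₂ + 1 : ℕ) : ℝ) / γE * Real.exp (-y / γE) := by
      have hpow : (1 - Real.exp (-y / γE)) ^ (M * k₂) ≤ 1 := pow_le_one₀ hB0 hB1
      calc ((M * k₂ + 1 : ℕ) : ℝ) / γE * Real.exp (-y / γE) *
            (1 - Real.exp (-y / γE)) ^ (M * k₂)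
          ≤ ((M * k₂ + 1 : ℕ) : ℝ) / γE * Real.exp (-y / γE) * 1 := by
            gcongr
          _ = _ := by ring
    exact mul_le_mul hp hq (by positivity) (by positivity)
  have hpoly : (1 + y) ^ (M + k₂) ≤
      (2 * γE) ^ (M + k₂) * ((M + k₂).factorial : ℝ) * Real.exp ((1 + y) / (2 * γE)) := by
    have hx : (0:ℝ) ≤ (1 + y) / (2 * γE) := by positivity
    have h := Real.pow_div_factorial_le_exp _ hx (M + k₂)
    rw [div_pow, div_div, div_le_iff₀ (by positivity)] at h
    calc (1 + y) ^ (M + k₂) ≤ Real.exp ((1 + y) / (2 * γE)) *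
        ((2 * γE) ^ (M + k₂) * ((M + k₂).factorial : ℝ)) := h
      _ = _ := by ring
  have hexp : Real.exp ((1 + y) / (2 * γE)) * Real.exp (-y / γE) =
      Real.exp (1 / (2 * γE)) * Real.exp (-(1 / (2 * γE)) * y) := by
    rw [← Real.exp_add, ← Real.exp_add]
    congr 1
    field_simp
    ring
  calc gncF M k₂ γE ξ γ y
      ≤ (ξ * (1 + y) / γ) ^ (M + k₂) *
        (((M * k₂ + 1 : ℕ) : ℝ) / γE * Real.exp (-y / γE)) := step1
    _ = ξ ^ (M + k₂) * (1 + y) ^ (M + k₂) / γ ^ (M + k₂) *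
        (((M * k₂ + 1 : ℕ) : ℝ) / γE * Real.exp (-y / γE)) := by
        rw [div_pow, mul_pow]
    _ ≤ ξ ^ (M + k₂) *
          ((2 * γE) ^ (M + k₂) * ((M + k₂).factorial : ℝ) *
            Real.exp ((1 + y) / (2 * γE))) / γ ^ (M + k₂) *
        (((M * k₂ + 1 : ℕ) : ℝ) / γE * Real.exp (-y / γE)) := by
        gcongr
    _ = _ := by
        linear_combination (ξ ^ (M + k₂) * (2 * γE) ^ (M + k₂) *
          ((M + k₂).factorial : ℝ) * (((M * k₂ + 1 : ℕ) : ℝ) / γE) / γ ^ (M + k₂)) * hexp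

/-- Pointwise lower bound on the strip `(1/2, 1]` for `γ ≥ 4ξ`. -/
private lemma gncF_ge (hγE : 0 < γE) (hξ : 1 < ξ) {γ y : ℝ} (hγ4 : 4 * ξ ≤ γ)
    (hy1 : 1 / 2 < y) (hy2 : y ≤ 1) :
    ((ξ - 1) / (3 * γ)) ^ (M + k₂) *
      (((M * k₂ + 1 : ℕ) : ℝ) / γE * Real.exp (-1 / γE) *
        (1 - Real.exp (-(1 / 2) / γE)) ^ (M * k₂)) ≤ gncF M k₂ γE ξ γ y := by
  have hξ0 : (0:ℝ) < ξ := by linarith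
  have hγ : (0:ℝ) < γ := by linarith
  have hy0 : (0:ℝ) ≤ y := by linarith
  have hc : (0:ℝ) ≤ ((M * k₂ + 1 : ℕ) : ℝ) / γE := by positivity
  have ht0 : 0 ≤ (ξ * (1 + y) - 1) / γ := div_nonneg (by nlinarith) hγ.le
  have ht1 : (ξ * (1 + y) - 1) / γ ≤ 1 := by
    rw [div_le_one hγ]; nlinarith
  have h3 := div3_le_one_sub_exp_neg ht0 ht1
  have hlow : (ξ - 1) / (3 * γ) ≤ 1 - Real.exp (-(ξ * (1 + y) - 1) / γ) := by
    rw [neg_div]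
    have h4 : (ξ - 1) / γ ≤ (ξ * (1 + y) - 1) / γ :=
      (div_le_div_iff_of_pos_right hγ).mpr (by nlinarith)
    have h5 : (ξ - 1) / (3 * γ) = ((ξ - 1) / γ) / 3 := by ring
    rw [h5]
    linarith
  have hlow0 : 0 ≤ (ξ - 1) / (3 * γ) := div_nonneg (by linarith) (by linarith)
  have he1 : Real.exp (-1 / γE) ≤ Real.exp (-y / γE) :=
    Real.exp_le_exp.2 ((div_le_div_iff_of_pos_right hγE).mpr (by linarith))
  have he2 : Real.exp (-y / γE) ≤ Real.exp (-(1 / 2) / γE) :=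
    Real.exp_le_exp.2 ((div_le_div_iff_of_pos_right hγE).mpr (by linarith))
  have hB0 : 0 ≤ 1 - Real.exp (-(1 / 2) / γE) := by
    have : Real.exp (-(1 / 2) / γE) ≤ 1 := by
      rw [Real.exp_le_one_iff, neg_div]; simp only [neg_nonpos]; positivity
    linarith
  unfold gncF
  have hpow1 : ((ξ - 1) / (3 * γ)) ^ (M + k₂) ≤
      (1 - Real.exp (-(ξ * (1 + y) - 1) / γ)) ^ (M + k₂) :=
    pow_le_pow_left₀ hlow0 hlow _
  have hpow2 : (1 - Real.exp (-(1 / 2) / γE)) ^ (M * k₂) ≤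
      (1 - Real.exp (-y / γE)) ^ (M * k₂) :=
    pow_le_pow_left₀ hB0 (by linarith) _
  have hρ : ((M * k₂ + 1 : ℕ) : ℝ) / γE * Real.exp (-1 / γE) *
      (1 - Real.exp (-(1 / 2) / γE)) ^ (M * k₂) ≤
      ((M * k₂ + 1 : ℕ) : ℝ) / γE * Real.exp (-y / γE) *
        (1 - Real.exp (-y / γE)) ^ (M * k₂) :=
    mul_le_mul (mul_le_mul_of_nonneg_left he1 hc) hpow2 (pow_nonneg hB0 _)
      (by positivity)
  exact mul_le_mul hpow1 hρ
    (mul_nonneg (mul_nonneg hc (Real.exp_pos _).le) (pow_nonneg hB0 _))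
    (pow_nonneg (by linarith) _)

end aux

/-- Corollary 1: the diversity order of the `M`-source GNC scheme with secrecy
constraints (partial CSI) remains `M + k₂`. -/
theorem gnc_diversity_order (M k₂ : ℕ) (hM : 2 ≤ M) (hk₂ : 1 ≤ k₂)
    (γE ξ : ℝ) (hγE : 0 < γE) (hξ : 1 < ξ) (S : ℝ → ℝ)
    (hS : ∀ γ : ℝ, 0 < γ → S γ =
      ∫ y in Set.Ioi (0:ℝ),
        (1 - Real.exp (-(ξ * (1 + y) - 1) / γ)) ^ (M + k₂) *
          (((M * k₂ + 1 : ℕ) : ℝ) / γE * Real.exp (-y / γE) *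
            (1 - Real.exp (-y / γE)) ^ (M * k₂))) :
    Tendsto (fun γ : ℝ => -Real.log (S γ) / Real.log γ) atTop
      (𝓝 ((M + k₂ : ℕ) : ℝ)) := by
  have hξ0 : (0:ℝ) < ξ := by linarith
  have hSf : ∀ γ : ℝ, 0 < γ → S γ = ∫ y in Set.Ioi (0:ℝ), gncF M k₂ γE ξ γ y := hS
  have hcont : ∀ γ : ℝ, Continuous (gncF M k₂ γE ξ γ) := by
    intro γ; unfold gncF; fun_prop
  set D : ℝ := ξ ^ (M + k₂) * (2 * γE) ^ (M + k₂) * ((M + k₂).factorial : ℝ) *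
      Real.exp (1 / (2 * γE)) * (((M * k₂ + 1 : ℕ) : ℝ) / γE) with hDdef
  have hg_int : ∀ γ : ℝ, IntegrableOn
      (fun y => D / γ ^ (M + k₂) * Real.exp (-(1 / (2 * γE)) * y)) (Set.Ioi 0) volume :=
    fun γ => (exp_neg_integrableOn_Ioi 0 (by positivity : (0:ℝ) < 1 / (2 * γE))).const_mul _
  have hf_int : ∀ γ : ℝ, 0 < γ → IntegrableOn (gncF M k₂ γE ξ γ) (Set.Ioi 0) volume := by
    intro γ hγ
    refine (hg_int γ).mono' ((hcont γ).aestronglyMeasurable) ?_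
    rw [ae_restrict_iff' measurableSet_Ioi]
    filter_upwards with y hy
    rw [Real.norm_eq_abs, abs_of_nonneg (gncF_nonneg hγE hξ hγ hy.le)]
    exact gncF_le hγE hξ hγ hy.le
  set I : ℝ := ∫ y in Set.Ioi (0:ℝ), Real.exp (-(1 / (2 * γE)) * y) with hIdef
  set c₂ : ℝ := D * I with hc₂def
  have hupper : ∀ γ : ℝ, 0 < γ → S γ ≤ c₂ / γ ^ (M + k₂) := by
    intro γ hγ
    calc S γ = ∫ y in Set.Ioi (0:ℝ), gncF M k₂ γE ξ γ y := hSf γ hγ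
      _ ≤ ∫ y in Set.Ioi (0:ℝ), D / γ ^ (M + k₂) * Real.exp (-(1 / (2 * γE)) * y) := by
          apply setIntegral_mono_on (hf_int γ hγ) (hg_int γ) measurableSet_Ioi
          intro y hy
          exact gncF_le hγE hξ hγ (le_of_lt hy)
      _ = D / γ ^ (M + k₂) * I := integral_const_mul _ _
      _ = c₂ / γ ^ (M + k₂) := by rw [hc₂def]; ring
  set d : ℝ := ((M * k₂ + 1 : ℕ) : ℝ) / γE * Real.exp (-1 / γE) *
      (1 - Real.exp (-(1 / 2) / γE)) ^ (M * k₂) with hddef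
  have hd : 0 < d := by
    have h1 : Real.exp (-(1 / 2) / γE) < 1 := by
      rw [Real.exp_lt_one_iff]
      exact div_neg_of_neg_of_pos (by norm_num) hγE
    have h2 : (0:ℝ) < ((M * k₂ + 1 : ℕ) : ℝ) / γE := by positivity
    have h3 : (0:ℝ) < 1 - Real.exp (-(1 / 2) / γE) := by linarith
    rw [hddef]
    exact mul_pos (mul_pos h2 (Real.exp_pos _)) (pow_pos h3 _)
  set c₁ : ℝ := ((ξ - 1) / 3) ^ (M + k₂) * d / 2 with hc₁def
  have hc₁ : 0 < c₁ := by
    have hb : (0:ℝ) < (ξ - 1) / 3 := by linarith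
    rw [hc₁def]
    exact div_pos (mul_pos (pow_pos hb _) hd) two_pos
  have hlower : ∀ γ : ℝ, max (4 * ξ) 1 ≤ γ → c₁ / γ ^ (M + k₂) ≤ S γ := by
    intro γ hγm
    have hγ4 : 4 * ξ ≤ γ := le_trans (le_max_left _ _) hγm
    have hγ : (0:ℝ) < γ := by linarith
    have hsub : Set.Ioc (1 / 2 : ℝ) 1 ⊆ Set.Ioi (0:ℝ) :=
      fun y hy => lt_trans (by norm_num) hy.1
    have hstep1 : ((ξ - 1) / (3 * γ)) ^ (M + k₂) * d * (1 / 2) ≤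
        ∫ y in Set.Ioc (1 / 2 : ℝ) 1, gncF M k₂ γE ξ γ y := by
      have hmono := setIntegral_mono_on
        (integrableOn_const measure_Ioc_lt_top.ne)
        ((hf_int γ hγ).mono_set hsub) measurableSet_Ioc
        (fun y hy => gncF_ge hγE hξ hγ4 hy.1 hy.2)
      rw [setIntegral_const, Real.volume_real_Ioc, smul_eq_mul,
        show (1:ℝ) - 1 / 2 = 1 / 2 by norm_num,
        max_eq_left (by norm_num : (0:ℝ) ≤ 1 / 2), ← hddef] at hmono
      linarith
    have hstep2 : (∫ y in Set.Ioc (1 / 2 : ℝ) 1, gncF M k₂ γE ξ γ y) ≤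
        ∫ y in Set.Ioi (0:ℝ), gncF M k₂ γE ξ γ y := by
      apply setIntegral_mono_set (hf_int γ hγ)
      · filter_upwards [ae_restrict_mem measurableSet_Ioi] with y hy
        exact gncF_nonneg hγE hξ hγ hy.le
      · exact HasSubset.Subset.eventuallyLE hsub
    have heq : c₁ / γ ^ (M + k₂) = ((ξ - 1) / (3 * γ)) ^ (M + k₂) * d * (1 / 2) := by
      rw [hc₁def, show (ξ - 1) / (3 * γ) = ((ξ - 1) / 3) / γ by ring]
      simp only [div_pow]
      ring
    rw [hSf γ hγ, heq]
    exact le_trans hstep1 hstep2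
  have hc12 : c₁ ≤ c₂ := by
    have hγ0 : (0:ℝ) < max (4 * ξ) 1 := lt_of_lt_of_le one_pos (le_max_right _ _)
    have h := le_trans (hlower _ (le_refl _)) (hupper _ hγ0)
    exact (div_le_div_iff_of_pos_right (pow_pos hγ0 _)).mp h
  have hc₂ : 0 < c₂ := lt_of_lt_of_le hc₁ hc12
  have hloT : Tendsto (fun γ : ℝ => ((M + k₂ : ℕ) : ℝ) - Real.log c₂ / Real.log γ)
      atTop (𝓝 ((M + k₂ : ℕ) : ℝ)) := by
    have h := (tendsto_const_nhds (x := Real.log c₂) (f := atTop (α := ℝ))).div_atTop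
      Real.tendsto_log_atTop
    simpa using tendsto_const_nhds.sub h
  have hhiT : Tendsto (fun γ : ℝ => ((M + k₂ : ℕ) : ℝ) - Real.log c₁ / Real.log γ)
      atTop (𝓝 ((M + k₂ : ℕ) : ℝ)) := by
    have h := (tendsto_const_nhds (x := Real.log c₁) (f := atTop (α := ℝ))).div_atTop
      Real.tendsto_log_atTop
    simpa using tendsto_const_nhds.sub h
  refine tendsto_of_tendsto_of_tendsto_of_le_of_le' hloT hhiT ?_ ?_
  · filter_upwards [eventually_ge_atTop (max (max (4 * ξ) 1) 2)] with γ hγm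
    have hγ2 : (2:ℝ) ≤ γ := le_trans (le_max_right _ _) hγm
    have hγm1 : max (4 * ξ) 1 ≤ γ := le_trans (le_max_left _ _) hγm
    have h1γ : (1:ℝ) < γ := by linarith
    have hγ : (0:ℝ) < γ := by linarith
    have hlog : 0 < Real.log γ := Real.log_pos h1γ
    have hSl := hlower γ hγm1
    have hSpos : 0 < S γ := lt_of_lt_of_le (by positivity) hSl
    have hlog2 : Real.log (S γ) ≤ Real.log c₂ - ((M + k₂ : ℕ) : ℝ) * Real.log γ := by
      have h := Real.log_le_log hSpos (hupper γ hγ)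
      rwa [Real.log_div (ne_of_gt hc₂) (by positivity), Real.log_pow] at h
    have heq : ((M + k₂ : ℕ) : ℝ) - Real.log c₂ / Real.log γ =
        (((M + k₂ : ℕ) : ℝ) * Real.log γ - Real.log c₂) / Real.log γ := by
      field_simp
    rw [heq]
    exact (div_le_div_iff_of_pos_right hlog).mpr (by linarith)
  · filter_upwards [eventually_ge_atTop (max (max (4 * ξ) 1) 2)] with γ hγm
    have hγ2 : (2:ℝ) ≤ γ := le_trans (le_max_right _ _) hγm
    have hγm1 : max (4 * ξ) 1 ≤ γ := le_trans (le_max_left _ _) hγm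
    have h1γ : (1:ℝ) < γ := by linarith
    have hγ : (0:ℝ) < γ := by linarith
    have hlog : 0 < Real.log γ := Real.log_pos h1γ
    have hSl := hlower γ hγm1
    have hSpos : 0 < S γ := lt_of_lt_of_le (by positivity) hSl
    have hlog1 : Real.log c₁ - ((M + k₂ : ℕ) : ℝ) * Real.log γ ≤ Real.log (S γ) := by
      have h := Real.log_le_log (by positivity) hSl
      rwa [Real.log_div (ne_of_gt hc₁) (by positivity), Real.log_pow] at h
    have heq : ((M + k₂ : ℕ) : ℝ) - Real.log c₁ / Real.log γ =
        (((M + k₂ : ℕ) : ℝ) * Real.log γ - Real.log c₁) / Real.log γ := by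
      field_simp
    rw [heq]
    exact (div_le_div_iff_of_pos_right hlog).mpr (by linarith)
end

section
/- Let k₁ ≥ 1 and k₂ ≥ 1 be integers, t_D > 0 and t_E > 0 real numbers, and γ_E > 0. Define, for p ∈ [0,1], O₁(p) = p · Σ_{i=0}^{2k₁−1} C(2k₁+2k₂−1, 2k₂+i) p^{2k₂+i} (1−p)^{2k₁−1−i} and O₂(p) = p · Σ_{i=0}^{k₁−1} C(k₁+k₂−1, k₂+i) p^{k₂+i} (1−p)^{k₁−1−i}, and O_GNC(p) = (1−p)·O₁(p) + p·O₂(p). Let p_E = 1 − e^{−t_E/γ_E} (a constant) and for γ > 0 let p_D(γ) = 1 − e^{−t_D/γ}. Then the secrecy outage probability without CSI, S(γ) = O_GNC(p_D(γ)) + (1 − O₁(p_E)) − O_GNC(p_D(γ))·(1 − O₁(p_E)), satisfies lim_{γ → ∞} S(γ) = 1 − O₁(p_E). (This is Theorem 2: when the SNR of the legitimate nodes increases without limit, the SOP of the GNC scheme presents an outage floor given by 1 − O₁(R_E, γ_E).) -/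
open Real Filter Topology Finset

/-- Theorem 2: when the legitimate SNR increases without limit, the no-CSI SOP of the
two-source GNC scheme tends to the outage floor `1 - O₁(p_E)`. -/
theorem gnc_sop_no_csi_floor (k₁ k₂ : ℕ) (hk₁ : 1 ≤ k₁) (hk₂ : 1 ≤ k₂)
    (tD tE γE : ℝ) (htD : 0 < tD) (htE : 0 < tE) (hγE : 0 < γE)
    (O₁ O₂ OGNC : ℝ → ℝ)
    (hO₁ : ∀ p : ℝ, O₁ p = p * ∑ i ∈ Finset.range (2 * k₁),
        ((2 * k₁ + 2 * k₂ - 1).choose (2 * k₂ + i) : ℝ) * p ^ (2 * k₂ + i) *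
          (1 - p) ^ (2 * k₁ - 1 - i))
    (hO₂ : ∀ p : ℝ, O₂ p = p * ∑ i ∈ Finset.range k₁,
        ((k₁ + k₂ - 1).choose (k₂ + i) : ℝ) * p ^ (k₂ + i) * (1 - p) ^ (k₁ - 1 - i))
    (hOGNC : ∀ p : ℝ, OGNC p = (1 - p) * O₁ p + p * O₂ p)
    (pE : ℝ) (hpE : pE = 1 - Real.exp (-tE / γE))
    (pD : ℝ → ℝ) (hpD : ∀ γ : ℝ, 0 < γ → pD γ = 1 - Real.exp (-tD / γ))
    (S : ℝ → ℝ)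
    (hs : ∀ γ : ℝ, 0 < γ →
      S γ = OGNC (pD γ) + (1 - O₁ pE) - OGNC (pD γ) * (1 - O₁ pE)) :
    Tendsto S atTop (𝓝 (1 - O₁ pE)) := by
  have hO₁fun : O₁ = fun p : ℝ => p * ∑ i ∈ Finset.range (2 * k₁),
      ((2 * k₁ + 2 * k₂ - 1).choose (2 * k₂ + i) : ℝ) * p ^ (2 * k₂ + i) *
        (1 - p) ^ (2 * k₁ - 1 - i) := funext hO₁
  have hO₂fun : O₂ = fun p : ℝ => p * ∑ i ∈ Finset.range k₁,
      ((k₁ + k₂ - 1).choose (k₂ + i) : ℝ) * p ^ (k₂ + i) * (1 - p) ^ (k₁ - 1 - i) :=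
    funext hO₂
  have hcont : Continuous OGNC := by
    have : OGNC = fun p : ℝ => (1 - p) * O₁ p + p * O₂ p := funext hOGNC
    rw [this, hO₁fun, hO₂fun]
    have hterm : ∀ (n : ℕ) (c : ℕ → ℝ) (a b : ℕ → ℕ),
        Continuous (fun p : ℝ => p * ∑ i ∈ Finset.range n, c i * p ^ a i * (1 - p) ^ b i) := by
      intro n c a b
      exact continuous_id.mul (continuous_finset_sum _ fun i _ =>
        ((continuous_const.mul (continuous_id.pow _)).mul
          ((continuous_const.sub continuous_id).pow _)))
    exact ((continuous_const.sub continuous_id).mul (hterm _ _ _ _)).add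
      (continuous_id.mul (hterm _ _ _ _))
  have hO₁0 : O₁ 0 = 0 := by rw [hO₁]; ring
  have hO₂0 : O₂ 0 = 0 := by rw [hO₂]; ring
  have hOGNC0 : OGNC 0 = 0 := by rw [hOGNC, hO₁0, hO₂0]; ring
  -- pD tends to 0
  have hpD0 : Tendsto pD atTop (𝓝 0) := by
    have h1 : Tendsto (fun γ : ℝ => 1 - Real.exp (-tD / γ)) atTop (𝓝 0) := by
      have : Tendsto (fun γ : ℝ => -tD / γ) atTop (𝓝 0) := by
        simpa [neg_div, div_eq_mul_inv, mul_comm] using (tendsto_inv_atTop_zero.const_mul (-tD))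
      have := (Real.continuous_exp.tendsto 0).comp this
      simp only [Real.exp_zero] at this
      simpa using (tendsto_const_nhds (x := (1:ℝ)) (f := atTop)).sub this
    refine h1.congr' ?_
    filter_upwards [eventually_gt_atTop 0] with γ hγ
    exact (hpD γ hγ).symm
  have hO : Tendsto (fun γ => OGNC (pD γ)) atTop (𝓝 0) := by
    have := (hcont.tendsto 0).comp hpD0
    simpa [hOGNC0, Function.comp_def] using this
  have hlim : Tendsto (fun γ => OGNC (pD γ) + (1 - O₁ pE) - OGNC (pD γ) * (1 - O₁ pE))
      atTop (𝓝 (1 - O₁ pE)) := by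
    have := (hO.add (tendsto_const_nhds (x := 1 - O₁ pE))).sub
      (hO.mul (tendsto_const_nhds (x := 1 - O₁ pE)))
    simpa using this
  refine hlim.congr' ?_
  filter_upwards [eventually_gt_atTop 0] with γ hγ
  exact (hs γ hγ).symm
end

section
/- Let X and Y be independent exponential random variables with means γ_D > 0 and γ_E > 0 respectively, and let ξ > 1. Then P(X < ξ(1+Y) − 1) = 1 − (γ_D/(γ_D + ξ γ_E)) · e^{−(ξ−1)/γ_D}. Equivalently, with ξ = 2^{R_s}, the secrecy outage probability of the direct transmission with partial CSI is S_DT^csi = 1 − (γ_D/(γ_D + 2^{R_s} γ_E)) exp(−(2^{R_s}−1)/γ_D). -/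
open MeasureTheory ProbabilityTheory Real

lemma expMeasure_ae_nonneg {r : ℝ} : ∀ᵐ y ∂(expMeasure r), 0 ≤ y := by
  rw [ae_iff]
  have h : {y : ℝ | ¬ 0 ≤ y} = Set.Iio 0 := by ext y; simp [not_le]
  rw [h]
  show volume.withDensity (exponentialPDF r) (Set.Iio 0) = 0
  rw [withDensity_apply _ measurableSet_Iio]
  exact lintegral_exponentialPDF_of_nonpos le_rfl

lemma expMeasure_Iic {r t : ℝ} (hr : 0 < r) (ht : 0 ≤ t) :
    expMeasure r (Set.Iic t) = ENNReal.ofReal (1 - Real.exp (-(r * t))) := by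
  show volume.withDensity (exponentialPDF r) (Set.Iic t) = _
  rw [withDensity_apply _ measurableSet_Iic, lintegral_exponentialPDF_eq_antiDeriv hr t,
    if_pos ht]

lemma expMeasure_singleton {r t : ℝ} : expMeasure r {t} = 0 := by
  show volume.withDensity (exponentialPDF r) {t} = 0
  rw [withDensity_apply _ (measurableSet_singleton t)]
  exact setLIntegral_measure_zero _ _ (measure_singleton t)

lemma expMeasure_Ici {r t : ℝ} (hr : 0 < r) (ht : 0 ≤ t) :
    expMeasure r (Set.Ici t) = ENNReal.ofReal (Real.exp (-(r * t))) := by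
  haveI := isProbabilityMeasure_expMeasure hr
  have hIio : expMeasure r (Set.Iio t) = ENNReal.ofReal (1 - Real.exp (-(r * t))) := by
    refine le_antisymm ?_ ?_
    · rw [← expMeasure_Iic hr ht]
      exact measure_mono Set.Iio_subset_Iic_self
    · calc ENNReal.ofReal (1 - Real.exp (-(r * t)))
          = expMeasure r (Set.Iic t) := (expMeasure_Iic hr ht).symm
        _ ≤ expMeasure r (Set.Iio t ∪ {t}) := by
            rw [Set.Iio_union_right]
        _ ≤ expMeasure r (Set.Iio t) + expMeasure r {t} := measure_union_le _ _
        _ = expMeasure r (Set.Iio t) := by rw [expMeasure_singleton, add_zero]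
  rw [← Set.compl_Iio, prob_compl_eq_one_sub measurableSet_Iio, hIio]
  have hexp : Real.exp (-(r * t)) ≤ 1 := by
    rw [Real.exp_le_one_iff]
    nlinarith
  rw [← ENNReal.ofReal_one, ← ENNReal.ofReal_sub _ (by linarith)]
  norm_num

/-- The secrecy outage probability of the direct transmission with partial CSI:
for independent exponentials `X` (mean `γ_D`) and `Y` (mean `γ_E`) and `ξ > 1`,
`P(X < ξ(1+Y) - 1) = 1 - (γ_D/(γ_D + ξγ_E)) e^{-(ξ-1)/γ_D}`. -/
theorem sop_dt_partial_csi {Ω : Type*} [MeasureSpace Ω]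
    [IsProbabilityMeasure (ℙ : Measure Ω)]
    (X Y : Ω → ℝ) (γD γE ξ : ℝ) (hγD : 0 < γD) (hγE : 0 < γE) (hξ : 1 < ξ)
    (hX : Measure.map X ℙ = expMeasure (1 / γD))
    (hY : Measure.map Y ℙ = expMeasure (1 / γE))
    (hXY : IndepFun X Y) :
    ℙ {ω | X ω < ξ * (1 + Y ω) - 1} =
      ENNReal.ofReal (1 - γD / (γD + ξ * γE) * Real.exp (-(ξ - 1) / γD)) := by
  have hξ0 : 0 < ξ := by linarith
  have hden : 0 < γD + ξ * γE := by positivity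
  have hrD : (0:ℝ) < 1/γD := by positivity
  have hrE : (0:ℝ) < 1/γE := by positivity
  haveI hpD := isProbabilityMeasure_expMeasure hrD
  haveI hpE := isProbabilityMeasure_expMeasure hrE
  have hXm : AEMeasurable X ℙ := by
    by_contra h
    rw [Measure.map_of_not_aemeasurable h] at hX
    exact (IsProbabilityMeasure.ne_zero (expMeasure (1/γD))) hX.symm
  have hYm : AEMeasurable Y ℙ := by
    by_contra h
    rw [Measure.map_of_not_aemeasurable h] at hY
    exact (IsProbabilityMeasure.ne_zero (expMeasure (1/γE))) hY.symm
  have hmap : Measure.map (fun ω => (X ω, Y ω)) ℙ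
      = (expMeasure (1/γD)).prod (expMeasure (1/γE)) := by
    rw [← hX, ← hY]
    exact (ProbabilityTheory.indepFun_iff_map_prod_eq_prod_map_map hXm hYm).mp hXY
  set s : Set (ℝ × ℝ) := {p | p.1 < ξ * (1 + p.2) - 1} with hs_def
  have hs : MeasurableSet s := by
    apply measurableSet_lt measurable_fst
    exact (measurable_const.mul (measurable_const.add measurable_snd)).sub measurable_const
  have h1 : ℙ {ω | X ω < ξ * (1 + Y ω) - 1}
      = ((expMeasure (1/γD)).prod (expMeasure (1/γE))) s := by
    rw [← hmap, Measure.map_apply_of_aemeasurable (hXm.prodMk hYm) hs]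
    rfl
  have h2 : ((expMeasure (1/γD)).prod (expMeasure (1/γE))) sᶜ
      = ENNReal.ofReal (γD / (γD + ξ * γE) * Real.exp (-(ξ - 1) / γD)) := by
    rw [Measure.prod_apply_symm hs.compl]
    have hcong : ∀ᵐ y ∂(expMeasure (1/γE)),
        expMeasure (1/γD) ((fun x => (x, y)) ⁻¹' sᶜ)
        = ENNReal.ofReal (Real.exp (-(1/γD * (ξ * (1 + y) - 1)))) := by
      filter_upwards [expMeasure_ae_nonneg] with y hy
      have hpre : (fun x => (x, y)) ⁻¹' sᶜ = Set.Ici (ξ * (1 + y) - 1) := by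
        ext x
        simp [hs_def, not_lt]
      rw [hpre, expMeasure_Ici hrD (by nlinarith)]
    rw [lintegral_congr_ae hcong]
    have hwd : expMeasure (1/γE) = volume.withDensity (exponentialPDF (1/γE)) := rfl
    have hgm : Measurable fun y : ℝ =>
        ENNReal.ofReal (Real.exp (-(1/γD * (ξ * (1 + y) - 1)))) := by
      apply Measurable.ennreal_ofReal
      exact (Real.continuous_exp.comp (by continuity)).measurable
    have hfm : Measurable (exponentialPDF (1/γE)) :=
      (measurable_exponentialPDFReal _).ennreal_ofReal
    rw [hwd, lintegral_withDensity_eq_lintegral_mul _ hfm hgm]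
    have ha : (0:ℝ) < 1/γE + ξ/γD := by positivity
    have hco : γD / (γD + ξ * γE) * (1/γE + ξ/γD) = 1/γE := by
      field_simp
    have hpt : ∀ y : ℝ, (exponentialPDF (1/γE) * fun y =>
          ENNReal.ofReal (Real.exp (-(1/γD * (ξ * (1 + y) - 1))))) y
        = ENNReal.ofReal (γD / (γD + ξ * γE) * Real.exp (-(ξ - 1) / γD))
            * exponentialPDF (1/γE + ξ/γD) y := by
      intro y
      simp only [Pi.mul_apply]
      rcases le_or_gt 0 y with hy | hy
      · rw [exponentialPDF_of_nonneg hy, exponentialPDF_of_nonneg hy,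
          ← ENNReal.ofReal_mul (by positivity), ← ENNReal.ofReal_mul (by positivity)]
        congr 1
        rw [mul_assoc, ← Real.exp_add,
          show γD / (γD + ξ * γE) * Real.exp (-(ξ - 1) / γD)
              * ((1/γE + ξ/γD) * Real.exp (-((1/γE + ξ/γD) * y)))
            = (γD / (γD + ξ * γE) * (1/γE + ξ/γD))
              * (Real.exp (-(ξ - 1) / γD) * Real.exp (-((1/γE + ξ/γD) * y))) from by ring,
          ← Real.exp_add, hco]
        congr 1
        field_simp
        ring
      · rw [exponentialPDF_of_neg hy, exponentialPDF_of_neg hy, zero_mul, mul_zero]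
    rw [lintegral_congr hpt, lintegral_const_mul' _ _ ENNReal.ofReal_ne_top,
      lintegral_exponentialPDF_eq_one ha, mul_one]
  have hk : 0 ≤ γD / (γD + ξ * γE) * Real.exp (-(ξ - 1) / γD) := by positivity
  rw [h1, ← compl_compl s, prob_compl_eq_one_sub hs.compl, h2,
    ENNReal.ofReal_sub _ hk, ENNReal.ofReal_one]
end

section
/- Let A₁, A₂ be independent exponential random variables with mean γ_D > 0, let B₁, B₂ be independent exponential random variables with mean γ_E > 0, with (A₁,A₂) independent of (B₁,B₂), and set X = A₁ + A₂ and Y = B₁ + B₂. Let ξ > 1. Then P(X < ξ(1+Y) − 1) = 1 − (γ_D/(γ_D + ξ γ_E)³) · e^{−(ξ−1)/γ_D} · [γ_D(ξ − 1 + γ_D) + ξ γ_E(ξ − 1 + 3γ_D)]. With ξ = 2^{2R_s}, this is the secrecy outage probability of the two-source decode-and-forward scheme with partial CSI and error-free intersource channels. -/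
open MeasureTheory ProbabilityTheory Real Set Filter Topology

namespace SopAux

lemma hasDeriv_aux (A B : ℝ) {s : ℝ} (hs : 0 < s) (x : ℝ) :
    HasDerivAt (fun x => -((A/s + B/s^2) + (B/s)*x) * exp (-(s*x)))
      ((A + B*x) * exp (-(s*x))) x := by
  have h1 : HasDerivAt (fun x : ℝ => -((A/s + B/s^2) + (B/s)*x)) (-(B/s)) x := by
    have h := (((hasDerivAt_id x).const_mul (B/s)).const_add (A/s + B/s^2)).neg
    simp only [id_eq, mul_one] at h
    exact h
  have h2 : HasDerivAt (fun x : ℝ => exp (-(s*x))) (exp (-(s*x)) * (-s)) x := by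
    have : HasDerivAt (fun x : ℝ => -(s*x)) (-s) x := by
      have h := (hasDerivAt_id x).const_mul (-s)
      simpa only [id_eq, mul_one, neg_mul] using h
    simpa [neg_mul] using this.exp
  have h := h1.mul h2
  convert h using 1
  · rfl
  · rfl
  · rfl
  have hs' : s ≠ 0 := hs.ne'
  field_simp
  ring

lemma tendsto_aux (C D : ℝ) {s : ℝ} (hs : 0 < s) :
    Tendsto (fun x => -(C + D*x) * exp (-(s*x))) atTop (𝓝 0) := by
  have h0 : Tendsto (fun x : ℝ => x ^ (0:ℝ) * exp (-s*x)) atTop (𝓝 0) :=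
    tendsto_rpow_mul_exp_neg_mul_atTop_nhds_zero 0 s hs
  have h1 : Tendsto (fun x : ℝ => x ^ (1:ℝ) * exp (-s*x)) atTop (𝓝 0) :=
    tendsto_rpow_mul_exp_neg_mul_atTop_nhds_zero 1 s hs
  simp only [rpow_zero, rpow_one] at h0 h1
  have h := ((h0.const_mul C).add (h1.const_mul D)).neg
  simp only [mul_zero, add_zero, neg_zero] at h
  refine h.congr fun x => ?_
  simp only [neg_mul]
  ring_nf

lemma integrableOn_J {A B s : ℝ} (hA : 0 ≤ A) (hB : 0 ≤ B) (hs : 0 < s) :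
    IntegrableOn (fun x => (A + B*x) * exp (-(s*x))) (Ioi (0:ℝ)) := by
  refine integrableOn_Ioi_deriv_of_nonneg' (g := fun x => -((A/s + B/s^2) + (B/s)*x) * exp (-(s*x)))
    (fun x _ => hasDeriv_aux A B hs x) (fun x hx => ?_) (tendsto_aux _ _ hs)
  have hx0 : (0:ℝ) < x := hx
  have : 0 ≤ A + B*x := by nlinarith
  positivity

lemma integral_J {A B s : ℝ} (hA : 0 ≤ A) (hB : 0 ≤ B) (hs : 0 < s) :
    ∫ x in Ioi (0:ℝ), (A + B*x) * exp (-(s*x)) = A/s + B/s^2 := by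
  rw [integral_Ioi_of_hasDerivAt_of_tendsto' (fun x _ => hasDeriv_aux A B hs x)
    (integrableOn_J hA hB hs) (tendsto_aux _ _ hs)]
  norm_num

lemma integral_M {r a b c : ℝ} (hr : 0 < r) (ha : 0 ≤ a) (hb : 0 ≤ b) (hc : 0 ≤ c) :
    ∫ x in Ioi (0:ℝ), r * exp (-(r*x)) * (1 - (a + b*x) * exp (-(c*x)))
      = 1 - r*a/(r+c) - r*b/(r+c)^2 := by
  have hrc : 0 < r + c := by linarith
  have h1 : ∀ x : ℝ, r * exp (-(r*x)) * (1 - (a + b*x) * exp (-(c*x)))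
      = (r + 0*x) * exp (-(r*x)) - ((r*a) + (r*b)*x) * exp (-((r+c)*x)) := by
    intro x
    rw [show -((r+c)*x) = -(r*x) + -(c*x) by ring, exp_add]
    ring
  simp_rw [h1]
  rw [integral_sub (integrableOn_J hr.le le_rfl hr) (integrableOn_J (by positivity) (by positivity) hrc),
    integral_J hr.le le_rfl hr, integral_J (by positivity) (by positivity) hrc]
  field_simp
  ring


lemma integrableOn_pdf_mul {r : ℝ} (hr : 0 < r) (f : ℝ → ℝ) (hm : Measurable f)
    (h0 : ∀ x, 0 ≤ x → 0 ≤ f x) (h1 : ∀ x, 0 ≤ x → f x ≤ 1) :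
    IntegrableOn (fun x => r * exp (-(r * x)) * f x) (Ioi (0:ℝ)) := by
  have hexp : IntegrableOn (fun x : ℝ => r * exp (-r * x)) (Ioi (0:ℝ)) :=
    (exp_neg_integrableOn_Ioi 0 hr).const_mul r
  refine hexp.mono' ?_ ?_
  · exact ((measurable_const.mul (by fun_prop)).mul hm).aestronglyMeasurable
  · rw [ae_restrict_iff' measurableSet_Ioi]
    refine ae_of_all _ fun x hx => ?_
    have hx0 : (0:ℝ) < x := hx
    have h0' := h0 x hx0.le
    have h1' := h1 x hx0.le
    have he : (0:ℝ) < exp (-(r*x)) := exp_pos _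
    have hnn2 : 0 ≤ r * exp (-(r*x)) * f x := by positivity
    rw [Real.norm_eq_abs, abs_of_nonneg hnn2, neg_mul]
    nlinarith [mul_le_mul_of_nonneg_left h1' (mul_pos hr he).le]

lemma lintegral_ofReal_expMeasure {r : ℝ} (hr : 0 < r) (f : ℝ → ℝ) (hm : Measurable f)
    (h0 : ∀ x, 0 ≤ x → 0 ≤ f x) (h1 : ∀ x, 0 ≤ x → f x ≤ 1) :
    ∫⁻ x, ENNReal.ofReal (f x) ∂(expMeasure r)
      = ENNReal.ofReal (∫ x in Ioi (0:ℝ), r * exp (-(r * x)) * f x) := by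
  have hpdfm : Measurable (gammaPDF 1 r) := (measurable_gammaPDFReal 1 r).ennreal_ofReal
  rw [expMeasure, gammaMeasure, lintegral_withDensity_eq_lintegral_mul volume hpdfm
    hm.ennreal_ofReal]
  simp only [Pi.mul_apply]
  rw [← lintegral_add_compl (fun x => gammaPDF 1 r x * ENNReal.ofReal (f x)) measurableSet_Ioi
    (μ := volume)]
  have hIic : ∫⁻ x in (Ioi (0:ℝ))ᶜ, gammaPDF 1 r x * ENNReal.ofReal (f x) = 0 := by
    rw [compl_Ioi, ← setLIntegral_congr (Iio_ae_eq_Iic (a := (0:ℝ)) (μ := volume))]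
    rw [setLIntegral_congr_fun measurableSet_Iio
      (fun x (hx : x < 0) => by rw [gammaPDF_of_neg hx, zero_mul])]
    simp
  rw [hIic, add_zero]
  have hpt : ∀ x ∈ Ioi (0:ℝ), gammaPDF 1 r x * ENNReal.ofReal (f x)
      = ENNReal.ofReal (r * exp (-(r * x)) * f x) := by
    intro x hx
    have hx0 : (0:ℝ) < x := hx
    rw [gammaPDF_eq, if_pos hx0.le]
    simp only [rpow_one, Real.Gamma_one, div_one, sub_self, rpow_zero, mul_one]
    rw [← ENNReal.ofReal_mul (by positivity)]
  have hnn : 0 ≤ᵐ[volume.restrict (Ioi (0:ℝ))] fun x => r * exp (-(r * x)) * f x := by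
    filter_upwards [ae_restrict_mem measurableSet_Ioi] with x hx
    have hx0 : (0:ℝ) < x := hx
    have := h0 x hx0.le
    positivity
  rw [setLIntegral_congr_fun measurableSet_Ioi hpt,
    ← ofReal_integral_eq_lintegral_ofReal (integrableOn_pdf_mul hr f hm h0 h1) hnn]

lemma expMeasure_Iio {r : ℝ} (hr : 0 < r) (z : ℝ) :
    expMeasure r (Iio z) = ENNReal.ofReal (if 0 ≤ z then 1 - exp (-(r*z)) else 0) := by
  rw [expMeasure, gammaMeasure, withDensity_apply _ measurableSet_Iio,
    setLIntegral_congr (Iio_ae_eq_Iic (a := z) (μ := volume))]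
  exact lintegral_exponentialPDF_eq_antiDeriv hr z

lemma twoExpCDF {r t : ℝ} (hr : 0 < r) (ht : 0 ≤ t) :
    ((expMeasure r).prod (expMeasure r)) {p : ℝ × ℝ | p.1 + p.2 < t}
      = ENNReal.ofReal (1 - exp (-(r*t)) * (1 + r*t)) := by
  haveI := isProbabilityMeasure_expMeasure hr
  have hS : MeasurableSet {p : ℝ × ℝ | p.1 + p.2 < t} :=
    measurableSet_lt (by fun_prop) measurable_const
  rw [Measure.prod_apply hS]
  set f : ℝ → ℝ := fun x => if x ≤ t then 1 - exp (-(r*(t-x))) else 0 with hf_def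
  have heq : ∀ x : ℝ, expMeasure r (Prod.mk x ⁻¹' {p : ℝ × ℝ | p.1 + p.2 < t})
      = ENNReal.ofReal (f x) := by
    intro x
    have hsec : (Prod.mk x ⁻¹' {p : ℝ × ℝ | p.1 + p.2 < t}) = Iio (t - x) := by
      ext y; simp [lt_sub_iff_add_lt']
    rw [hsec, expMeasure_Iio hr]
    congr 1
    simp only [hf_def, sub_nonneg]
  rw [lintegral_congr heq]
  have hfm : Measurable f := by
    refine Measurable.ite measurableSet_Iic (by fun_prop) measurable_const
  have hf0 : ∀ x, 0 ≤ x → 0 ≤ f x := by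
    intro x hx
    simp only [hf_def]
    split_ifs with h
    · have h1 : exp (-(r*(t-x))) ≤ 1 := exp_le_one_iff.mpr (by nlinarith)
      linarith
    · exact le_rfl
  have hf1 : ∀ x, 0 ≤ x → f x ≤ 1 := by
    intro x hx
    simp only [hf_def]
    split_ifs with h
    · have h1 : (0:ℝ) < exp (-(r*(t-x))) := exp_pos _
      nlinarith
    · norm_num
  rw [lintegral_ofReal_expMeasure hr f hfm hf0 hf1]
  congr 1
  have hint := integrableOn_pdf_mul hr f hfm hf0 hf1
  rw [← Ioc_union_Ioi_eq_Ioi ht,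
    setIntegral_union (Ioc_disjoint_Ioi le_rfl) measurableSet_Ioi
      (hint.mono_set Ioc_subset_Ioi_self) (hint.mono_set (Ioi_subset_Ioi ht))]
  have hzero : ∫ x in Ioi t, r * exp (-(r*x)) * f x = 0 := by
    have hEq : EqOn (fun x => r * exp (-(r*x)) * f x) (fun _ => (0:ℝ)) (Ioi t) := by
      intro x hx
      simp only [hf_def, if_neg (not_le.mpr (show t < x from hx))]
      ring
    rw [setIntegral_congr_fun measurableSet_Ioi hEq, integral_zero]
  have hmain : ∫ x in Ioc 0 t, r * exp (-(r*x)) * f x = 1 - exp (-(r*t)) * (1 + r*t) := by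
    have hEq : EqOn (fun x => r * exp (-(r*x)) * f x)
        (fun x => r * exp (-(r*x)) - r * exp (-(r*t))) (Ioc 0 t) := by
      intro x hx
      simp only [hf_def, if_pos hx.2]
      rw [show -(r*t) = -(r*x) + -(r*(t-x)) by ring, exp_add]
      ring
    rw [setIntegral_congr_fun measurableSet_Ioc hEq, ← intervalIntegral.integral_of_le ht,
      intervalIntegral.integral_eq_sub_of_hasDerivAt
        (f := fun y => -exp (-(r*y)) - r * exp (-(r*t)) * y)
        (f' := fun x => r * exp (-(r*x)) - r * exp (-(r*t)))
        (fun x _ => by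
          have h2 : HasDerivAt (fun y : ℝ => r * exp (-(r*t)) * y) (r * exp (-(r*t))) x := by
            have h := (hasDerivAt_id x).const_mul (r * exp (-(r*t)))
            simpa only [id_eq, mul_one] using h
          exact hasDerivAt_neg_exp_mul_exp.sub h2)
        ((((continuous_const.mul (by fun_prop : Continuous fun x : ℝ => exp (-(r*x)))).sub
          continuous_const).intervalIntegrable 0 t :
            IntervalIntegrable (fun x : ℝ => r * exp (-(r*x)) - r * exp (-(r*t))) volume 0 t))]
    simp only [mul_zero, neg_zero, exp_zero]
    ring
  rw [hzero, hmain, add_zero]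


lemma aemeasurable_of_map_expMeasure {Ω : Type*} [MeasureSpace Ω]
    [IsProbabilityMeasure (ℙ : Measure Ω)] {f : Ω → ℝ} {r : ℝ} (hr : 0 < r)
    (h : Measure.map f ℙ = expMeasure r) : AEMeasurable f ℙ := by
  by_contra hc
  rw [Measure.map_of_not_aemeasurable hc] at h
  haveI := isProbabilityMeasure_expMeasure hr
  have h2 := congrArg (fun m : Measure ℝ => m Set.univ) h
  simp [measure_univ] at h2

end SopAux

open SopAux Set

set_option maxHeartbeats 2000000 in
/-- The secrecy outage probability of the two-source decode-and-forward scheme with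
partial CSI and error-free intersource channels: for `X = A₁ + A₂` (sum of independent
exponentials of mean `γ_D`) and `Y = B₁ + B₂` (sum of independent exponentials of mean
`γ_E`), with `(A₁,A₂)` independent of `(B₁,B₂)` and `ξ > 1`,
`P(X < ξ(1+Y) - 1)
  = 1 - (γ_D/(γ_D + ξγ_E)³) e^{-(ξ-1)/γ_D} [γ_D(ξ-1+γ_D) + ξγ_E(ξ-1+3γ_D)]`. -/
theorem sop_df_partial_csi {Ω : Type*} [MeasureSpace Ω]
    [IsProbabilityMeasure (ℙ : Measure Ω)]
    (A₁ A₂ B₁ B₂ : Ω → ℝ) (γD γE ξ : ℝ) (hγD : 0 < γD) (hγE : 0 < γE) (hξ : 1 < ξ)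
    (hA₁ : Measure.map A₁ ℙ = expMeasure (1 / γD))
    (hA₂ : Measure.map A₂ ℙ = expMeasure (1 / γD))
    (hB₁ : Measure.map B₁ ℙ = expMeasure (1 / γE))
    (hB₂ : Measure.map B₂ ℙ = expMeasure (1 / γE))
    (hA : IndepFun A₁ A₂) (hB : IndepFun B₁ B₂)
    (hAB : IndepFun (fun ω => (A₁ ω, A₂ ω)) (fun ω => (B₁ ω, B₂ ω))) :
    ℙ {ω | A₁ ω + A₂ ω < ξ * (1 + (B₁ ω + B₂ ω)) - 1} =
      ENNReal.ofReal (1 - γD / (γD + ξ * γE) ^ 3 * Real.exp (-(ξ - 1) / γD) *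
        (γD * (ξ - 1 + γD) + ξ * γE * (ξ - 1 + 3 * γD))) := by
  have hrD : (0:ℝ) < 1/γD := by positivity
  have hrE : (0:ℝ) < 1/γE := by positivity
  haveI hPμ : IsProbabilityMeasure (expMeasure (1/γD)) := isProbabilityMeasure_expMeasure hrD
  haveI hPν : IsProbabilityMeasure (expMeasure (1/γE)) := isProbabilityMeasure_expMeasure hrE
  have hA₁m := aemeasurable_of_map_expMeasure hrD hA₁
  have hA₂m := aemeasurable_of_map_expMeasure hrD hA₂
  have hB₁m := aemeasurable_of_map_expMeasure hrE hB₁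
  have hB₂m := aemeasurable_of_map_expMeasure hrE hB₂
  have hmapA : Measure.map (fun ω => (A₁ ω, A₂ ω)) ℙ
      = (expMeasure (1/γD)).prod (expMeasure (1/γD)) := by
    rw [(indepFun_iff_map_prod_eq_prod_map_map hA₁m hA₂m).mp hA, hA₁, hA₂]
  have hmapB : Measure.map (fun ω => (B₁ ω, B₂ ω)) ℙ
      = (expMeasure (1/γE)).prod (expMeasure (1/γE)) := by
    rw [(indepFun_iff_map_prod_eq_prod_map_map hB₁m hB₂m).mp hB, hB₁, hB₂]
  have hmapT : Measure.map (fun ω => ((A₁ ω, A₂ ω), (B₁ ω, B₂ ω))) ℙ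
      = ((expMeasure (1/γD)).prod (expMeasure (1/γD))).prod
        ((expMeasure (1/γE)).prod (expMeasure (1/γE))) := by
    rw [(indepFun_iff_map_prod_eq_prod_map_map (hA₁m.prodMk hA₂m) (hB₁m.prodMk hB₂m)).mp hAB,
      hmapA, hmapB]
  set r : ℝ := 1/γD with hr_def
  set q : ℝ := 1/γE with hq_def
  have hrpos : 0 < r := hrD
  have hqpos : 0 < q := hrE
  have hS : MeasurableSet {p : (ℝ × ℝ) × ℝ × ℝ | p.1.1 + p.1.2 < ξ * (1 + (p.2.1 + p.2.2)) - 1} :=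
    measurableSet_lt (by fun_prop) (by fun_prop)
  have hPev : ℙ {ω | A₁ ω + A₂ ω < ξ * (1 + (B₁ ω + B₂ ω)) - 1}
      = (((expMeasure r).prod (expMeasure r)).prod ((expMeasure q).prod (expMeasure q)))
        {p : (ℝ × ℝ) × ℝ × ℝ | p.1.1 + p.1.2 < ξ * (1 + (p.2.1 + p.2.2)) - 1} := by
    rw [← hmapT, Measure.map_apply_of_aemeasurable
      ((hA₁m.prodMk hA₂m).prodMk (hB₁m.prodMk hB₂m)) hS]
    rfl
  rw [hPev, Measure.prod_apply_symm hS]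
  set d : ℝ := r * (ξ - 1) with hd_def
  set β : ℝ := r * ξ with hβ_def
  have hdpos : 0 < d := mul_pos hrpos (by linarith)
  have hβpos : 0 < β := mul_pos hrpos (by linarith)
  have hsum : 0 < q + β := by linarith
  have hIio0 : expMeasure q (Iio 0) = 0 := by
    rw [expMeasure_Iio hqpos]
    norm_num
  set f₂ : ℝ → ℝ := fun s => 1 - exp (-(r * (ξ * (1 + s) - 1))) * (1 + r * (ξ * (1 + s) - 1))
    with hf₂_def
  have hf₂m : Measurable f₂ := by fun_prop
  have hf₂0 : ∀ s, 0 ≤ s → 0 ≤ f₂ s := by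
    intro s hs
    simp only [hf₂_def]
    have hu : 0 ≤ r * (ξ * (1 + s) - 1) := by nlinarith
    set u := r * (ξ * (1 + s) - 1) with hu_def
    have h1 := add_one_le_exp u
    have h3 : exp (-u) * exp u = 1 := by rw [← exp_add]; simp
    nlinarith [exp_pos (-u), mul_le_mul_of_nonneg_left h1 (exp_pos (-u)).le]
  have hf₂1 : ∀ s, 0 ≤ s → f₂ s ≤ 1 := by
    intro s hs
    simp only [hf₂_def]
    have hu : 0 ≤ r * (ξ * (1 + s) - 1) := by nlinarith
    nlinarith [exp_pos (-(r * (ξ * (1 + s) - 1)))]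
  have hcoord : ∀ᵐ y ∂((expMeasure q).prod (expMeasure q)), 0 ≤ y.1 ∧ 0 ≤ y.2 := by
    rw [ae_iff]
    refine measure_mono_null (t := (Iio 0 ×ˢ univ) ∪ (univ ×ˢ Iio (0:ℝ)))
      (fun y hy => ?_) (measure_union_null ?_ ?_)
    · simp only [mem_setOf_eq, not_and_or, not_le] at hy
      rcases hy with h | h
      · exact Or.inl ⟨h, mem_univ _⟩
      · exact Or.inr ⟨mem_univ _, h⟩
    · rw [Measure.prod_prod, hIio0, zero_mul]
    · rw [Measure.prod_prod, hIio0, mul_zero]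
  have hstep1 : ∫⁻ y, ((expMeasure r).prod (expMeasure r))
        ((fun x => (x, y)) ⁻¹'
          {p : (ℝ × ℝ) × ℝ × ℝ | p.1.1 + p.1.2 < ξ * (1 + (p.2.1 + p.2.2)) - 1})
        ∂((expMeasure q).prod (expMeasure q))
      = ∫⁻ y, ENNReal.ofReal (f₂ (y.1 + y.2)) ∂((expMeasure q).prod (expMeasure q)) := by
    refine lintegral_congr_ae (hcoord.mono fun y hy => ?_)
    beta_reduce
    have ht : 0 ≤ ξ * (1 + (y.1 + y.2)) - 1 := by nlinarith [hy.1, hy.2]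
    have hsec : ((fun x => (x, y)) ⁻¹'
          {p : (ℝ × ℝ) × ℝ × ℝ | p.1.1 + p.1.2 < ξ * (1 + (p.2.1 + p.2.2)) - 1})
        = {p : ℝ × ℝ | p.1 + p.2 < ξ * (1 + (y.1 + y.2)) - 1} := rfl
    rw [hsec, twoExpCDF hrpos ht]
  have hmeas2 : Measurable fun y : ℝ × ℝ => ENNReal.ofReal (f₂ (y.1 + y.2)) :=
    (hf₂m.comp (measurable_fst.add measurable_snd)).ennreal_ofReal
  rw [hstep1, lintegral_prod _ hmeas2.aemeasurable]
  set G : ℝ → ℝ := fun y => 1 - q * ((1 + d + β*y) * (exp (-d) * exp (-(β*y)))) / (q+β)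
      - q * (β * (exp (-d) * exp (-(β*y)))) / (q+β)^2 with hG_def
  have hinner : ∀ y : ℝ, 0 ≤ y →
      (∫⁻ x, ENNReal.ofReal (f₂ (y + x)) ∂(expMeasure q)) = ENNReal.ofReal (G y) := by
    intro y hy
    have hm2 : Measurable fun x : ℝ => f₂ (y + x) :=
      hf₂m.comp (measurable_const.add measurable_id)
    rw [lintegral_ofReal_expMeasure hqpos (fun x => f₂ (y + x)) hm2
      (fun x hx => hf₂0 _ (by linarith)) (fun x hx => hf₂1 _ (by linarith))]
    have hpt : ∀ x : ℝ, q * exp (-(q*x)) * f₂ (y + x)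
        = q * exp (-(q*x)) * (1 - ((1 + d + β*y) * (exp (-d) * exp (-(β*y)))
            + (β * (exp (-d) * exp (-(β*y)))) * x) * exp (-(β*x))) := by
      intro x
      simp only [hf₂_def, hd_def, hβ_def]
      rw [show -(r * (ξ * (1 + (y + x)) - 1)) = -(r*(ξ-1)) + (-(r*ξ*y) + -(r*ξ*x)) by ring,
        exp_add, exp_add]
      ring
    have hnn1 : 0 ≤ (1 + d + β*y) * (exp (-d) * exp (-(β*y))) := by
      have h1 : (0:ℝ) ≤ 1 + d + β*y := by nlinarith
      have h2 : (0:ℝ) < exp (-d) * exp (-(β*y)) := by positivity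
      exact mul_nonneg h1 h2.le
    have hnn2 : 0 ≤ β * (exp (-d) * exp (-(β*y))) := by
      have h2 : (0:ℝ) < exp (-d) * exp (-(β*y)) := by positivity
      exact mul_nonneg hβpos.le h2.le
    simp_rw [hpt]
    rw [integral_M hqpos hnn1 hnn2 hβpos.le]
  have haeq : ∀ᵐ y ∂(expMeasure q), 0 ≤ y := by
    rw [ae_iff]
    have hset : {y : ℝ | ¬ 0 ≤ y} = Iio 0 := by ext y; simp
    rw [hset]
    exact hIio0
  rw [lintegral_congr_ae (haeq.mono fun y hy => hinner y hy)]
  have hGm : Measurable G := by fun_prop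
  have hG1 : ∀ y, 0 ≤ y → G y ≤ 1 := by
    intro y hy
    simp only [hG_def]
    have h1 : (0:ℝ) ≤ 1 + d + β*y := by nlinarith
    have hE : (0:ℝ) < exp (-d) * exp (-(β*y)) := by positivity
    have t1 : 0 ≤ q * ((1 + d + β*y) * (exp (-d) * exp (-(β*y)))) / (q+β) :=
      div_nonneg (mul_nonneg hqpos.le (mul_nonneg h1 hE.le)) hsum.le
    have t2 : 0 ≤ q * (β * (exp (-d) * exp (-(β*y)))) / (q+β)^2 :=
      div_nonneg (mul_nonneg hqpos.le (mul_nonneg hβpos.le hE.le)) (pow_pos hsum 2).le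
    linarith
  have hG0 : ∀ y, 0 ≤ y → 0 ≤ G y := by
    intro y hy
    simp only [hG_def]
    have hE : exp (-d) * exp (-(β*y)) = exp (-(d + β*y)) := by
      rw [← exp_add]
      ring_nf
    rw [hE, show (1:ℝ) + d + β*y = 1 + (d + β*y) by ring]
    set u := d + β*y with hu_def
    have hu : 0 ≤ u := by nlinarith
    have e3 : (0:ℝ) < exp (-u) := exp_pos _
    have e1 : (1+u) * exp (-u) ≤ 1 := by
      have h1 := add_one_le_exp u
      have h3 : exp (-u) * exp u = 1 := by rw [← exp_add]; simp
      nlinarith [mul_le_mul_of_nonneg_left h1 e3.le]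
    have e2 : exp (-u) ≤ 1 := exp_le_one_iff.mpr (by linarith)
    have c1 : q * ((1 + u) * exp (-u)) / (q+β) ≤ q * 1 / (q+β) := by
      gcongr
    have c2 : q * (β * exp (-u)) / (q+β)^2 ≤ q * (β * 1) / (q+β)^2 := by
      gcongr
    have c3 : q * 1 / (q+β) + q * (β*1) / (q+β)^2 ≤ 1 := by
      rw [div_add_div _ _ (ne_of_gt hsum) (ne_of_gt (pow_pos hsum 2)),
        div_le_one (by positivity)]
      nlinarith [sq_nonneg β]
    linarith
  rw [lintegral_ofReal_expMeasure hqpos G hGm hG0 hG1]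
  have hpt2 : ∀ x : ℝ, q * exp (-(q*x)) * G x
      = q * exp (-(q*x)) * (1 - ((q*((1+d)*exp (-d))/(q+β) + q*(β*exp (-d))/(q+β)^2)
          + (q*(β*exp (-d))/(q+β)) * x) * exp (-(β*x))) := by
    intro x
    simp only [hG_def]
    have hne1 : (q+β) ≠ 0 := ne_of_gt hsum
    field_simp
    ring
  have hA'' : 0 ≤ q*((1+d)*exp (-d))/(q+β) + q*(β*exp (-d))/(q+β)^2 := by
    have e1 : (0:ℝ) < exp (-d) := exp_pos _
    apply add_nonneg
    · exact div_nonneg (mul_nonneg hqpos.le (mul_nonneg (by linarith) e1.le)) hsum.le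
    · exact div_nonneg (mul_nonneg hqpos.le (mul_nonneg hβpos.le e1.le)) (pow_pos hsum 2).le
  have hB'' : 0 ≤ q*(β*exp (-d))/(q+β) := by
    have e1 : (0:ℝ) < exp (-d) := exp_pos _
    exact div_nonneg (mul_nonneg hqpos.le (mul_nonneg hβpos.le e1.le)) hsum.le
  simp_rw [hpt2]
  rw [integral_M hqpos hA'' hB'' hβpos.le]
  congr 1
  rw [show Real.exp (-(ξ - 1) / γD) = Real.exp (-(1/γD*(ξ-1))) by rw [show -(ξ-1)/γD = -(1/γD*(ξ-1)) by ring]]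
  rw [hd_def, hβ_def, hr_def, hq_def]
  have hne2 : γD + ξ * γE ≠ 0 := by positivity
  have h1 : γD ≠ 0 := hγD.ne'
  have h2 : γE ≠ 0 := hγE.ne'
  field_simp
  ring
end

section
/- Let t > 0 and, for γ > 0, define O(γ) = 1 − e^{−t/γ}, O_MRC(γ) = 1 − e^{−t/γ}(1 + t/γ), O₁(γ) = O(γ)·[3·O(γ)²(1 − O(γ)) + O(γ)³], and O_NC(γ) = (1 − O(γ))·O₁(γ) + O(γ)·O_MRC(γ). Then lim_{γ → ∞} O_NC(γ)/O(γ)³ = 3.5; i.e., at high SNR the overall outage probability of the two-source network-coded cooperative scheme satisfies O_NC(γ) ≈ 3.5·[1 − e^{−(2^{2R}−1)/γ}]³, achieving diversity order 3. -/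
open Real Filter Topology

private lemma hasDerivAt_one_sub_exp_neg (x : ℝ) :
    HasDerivAt (fun y : ℝ => 1 - Real.exp (-y)) (Real.exp (-x)) x := by
  have h1 := (Real.hasDerivAt_exp (-x)).comp x (hasDerivAt_neg x)
  have h2 := (hasDerivAt_const x (1:ℝ)).sub h1
  simpa [Function.comp_def, Pi.sub_def] using h2

private lemma slope_lim : Tendsto (fun x : ℝ => x / (1 - Real.exp (-x))) (𝓝[>] (0:ℝ)) (𝓝 1) := by
  have hd : HasDerivAt (fun x : ℝ => 1 - Real.exp (-x)) 1 0 := by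
    simpa using hasDerivAt_one_sub_exp_neg 0
  have h1 := hasDerivAt_iff_tendsto_slope.mp hd
  have h2 : Tendsto (slope (fun x : ℝ => 1 - Real.exp (-x)) 0) (𝓝[>] (0:ℝ)) (𝓝 1) :=
    h1.mono_left (nhdsWithin_mono _ (fun x hx => ne_of_gt hx))
  have h3 := h2.inv₀ one_ne_zero
  rw [inv_one] at h3
  refine h3.congr fun x => ?_
  rw [slope_def_field]
  simp [inv_div, Real.exp_zero]

private lemma key_lim :
    Tendsto (fun x : ℝ => (1 - Real.exp (-x) * (1 + x)) / (1 - Real.exp (-x)) ^ 2)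
      (𝓝[>] (0:ℝ)) (𝓝 (1/2)) := by
  have hf : ∀ x ∈ Set.Ioo (0:ℝ) 1,
      HasDerivAt (fun x : ℝ => 1 - Real.exp (-x) * (1 + x)) (x * Real.exp (-x)) x := by
    intro x _
    have he : HasDerivAt (fun x : ℝ => Real.exp (-x)) (-Real.exp (-x)) x := by
      have := (Real.hasDerivAt_exp (-x)).comp x (hasDerivAt_neg x)
      simpa [Function.comp_def] using this
    have h1 : HasDerivAt (fun x : ℝ => (1:ℝ) + x) 1 x := by
      simpa [Pi.add_def] using (hasDerivAt_const x (1:ℝ)).add (hasDerivAt_id x)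
    have h2 := he.mul h1
    have h3 := (hasDerivAt_const x (1:ℝ)).sub h2
    refine h3.congr_deriv ?_
    ring
  have hg : ∀ x ∈ Set.Ioo (0:ℝ) 1,
      HasDerivAt (fun x : ℝ => (1 - Real.exp (-x)) ^ 2)
        (2 * (1 - Real.exp (-x)) * Real.exp (-x)) x := by
    intro x _
    have h4 := HasDerivAt.pow (n := 2) (hasDerivAt_one_sub_exp_neg x)
    refine h4.congr_deriv ?_
    norm_num
  have hg' : ∀ x ∈ Set.Ioo (0:ℝ) 1, 2 * (1 - Real.exp (-x)) * Real.exp (-x) ≠ 0 := by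
    intro x hx
    have h1 : Real.exp (-x) < 1 := Real.exp_lt_one_iff.mpr (by linarith [hx.1])
    have h2 : (0:ℝ) < Real.exp (-x) := Real.exp_pos _
    exact mul_ne_zero (mul_ne_zero two_ne_zero (by linarith)) h2.ne'
  have hfa : Tendsto (fun x : ℝ => 1 - Real.exp (-x) * (1 + x)) (𝓝[>] (0:ℝ)) (𝓝 0) := by
    have h5 : ContinuousAt (fun x : ℝ => 1 - Real.exp (-x) * (1 + x)) 0 := by fun_prop
    simpa using h5.tendsto.mono_left (nhdsWithin_le_nhds (s := Set.Ioi 0))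
  have hga : Tendsto (fun x : ℝ => (1 - Real.exp (-x)) ^ 2) (𝓝[>] (0:ℝ)) (𝓝 0) := by
    have h5 : ContinuousAt (fun x : ℝ => (1 - Real.exp (-x)) ^ 2) 0 := by fun_prop
    simpa using h5.tendsto.mono_left (nhdsWithin_le_nhds (s := Set.Ioi 0))
  have hdiv : Tendsto (fun x : ℝ => x * Real.exp (-x) / (2 * (1 - Real.exp (-x)) * Real.exp (-x)))
      (𝓝[>] (0:ℝ)) (𝓝 (1/2)) := by
    have h1 : Tendsto (fun x : ℝ => x / (1 - Real.exp (-x)) / 2) (𝓝[>] (0:ℝ)) (𝓝 (1/2)) := by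
      simpa using slope_lim.div_const 2
    refine h1.congr' ?_
    filter_upwards [self_mem_nhdsWithin] with x hx
    have h2 : Real.exp (-x) ≠ 0 := (Real.exp_pos _).ne'
    have h3 : Real.exp (-x) < 1 := Real.exp_lt_one_iff.mpr (by simpa using hx)
    have h4 : 1 - Real.exp (-x) ≠ 0 := by linarith
    field_simp
  exact HasDerivAt.lhopital_zero_right_on_Ioo (by norm_num : (0:ℝ) < 1) hf hg hg' hfa hga hdiv

/-- At high SNR the overall outage probability of the two-source network-coded
cooperative scheme satisfies `O_NC(γ) ≈ 3.5 · O(γ)³`, i.e.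
`lim_{γ→∞} O_NC(γ)/O(γ)³ = 3.5`, achieving diversity order 3. -/
theorem nc_outage_high_snr (t : ℝ) (ht : 0 < t)
    (O OMRC O₁ ONC : ℝ → ℝ)
    (hO : ∀ γ : ℝ, O γ = 1 - Real.exp (-t / γ))
    (hOMRC : ∀ γ : ℝ, OMRC γ = 1 - Real.exp (-t / γ) * (1 + t / γ))
    (hO₁ : ∀ γ : ℝ, O₁ γ = O γ * (3 * (O γ) ^ 2 * (1 - O γ) + (O γ) ^ 3))
    (hONC : ∀ γ : ℝ, ONC γ = (1 - O γ) * O₁ γ + O γ * OMRC γ) :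
    Tendsto (fun γ : ℝ => ONC γ / (O γ) ^ 3) atTop (𝓝 (3.5 : ℝ)) := by
  have hx : Tendsto (fun γ : ℝ => t / γ) atTop (𝓝[>] (0:ℝ)) := by
    rw [tendsto_nhdsWithin_iff]
    constructor
    · exact tendsto_const_nhds.div_atTop tendsto_id
    · filter_upwards [eventually_gt_atTop 0] with γ hγ
      exact div_pos ht hγ
  have hO0 : Tendsto O atTop (𝓝 0) := by
    have hneg : Tendsto (fun γ : ℝ => -(t/γ)) atTop (𝓝 0) := by
      simpa using (hx.mono_right nhdsWithin_le_nhds).neg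
    have h1 : Tendsto (fun γ : ℝ => Real.exp (-(t/γ))) atTop (𝓝 1) := by
      have := (Real.continuous_exp.tendsto 0).comp hneg
      simpa [Function.comp_def] using this
    have h2 := (tendsto_const_nhds : Tendsto (fun _ : ℝ => (1:ℝ)) atTop (𝓝 1)).sub h1
    simp only [sub_self] at h2
    refine h2.congr fun γ => ?_
    rw [hO, neg_div]
  have term1 : Tendsto (fun γ : ℝ => (1 - O γ) * (3 - 2 * O γ)) atTop (𝓝 3) := by
    have ha : Tendsto (fun γ : ℝ => 1 - O γ) atTop (𝓝 (1 - 0)) :=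
      (tendsto_const_nhds : Tendsto (fun _ : ℝ => (1:ℝ)) atTop (𝓝 1)).sub hO0
    have hb : Tendsto (fun γ : ℝ => 3 - 2 * O γ) atTop (𝓝 (3 - 2 * 0)) :=
      (tendsto_const_nhds : Tendsto (fun _ : ℝ => (3:ℝ)) atTop (𝓝 3)).sub (hO0.const_mul 2)
    have := ha.mul hb
    norm_num at this
    exact this
  have term2 := key_lim.comp hx
  have hsum := term1.add term2
  have h35 : (3:ℝ) + 1/2 = 3.5 := by norm_num
  rw [h35] at hsum
  refine hsum.congr' ?_
  filter_upwards [eventually_gt_atTop 0] with γ hγ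
  have hx0 : 0 < t / γ := div_pos ht hγ
  have he1 : Real.exp (-(t/γ)) < 1 := Real.exp_lt_one_iff.mpr (by linarith)
  have hne : 1 - Real.exp (-(t/γ)) ≠ 0 := by linarith
  simp only [Function.comp]
  rw [hONC, hO₁, hOMRC]
  simp only [hO, neg_div]
  set x := t / γ with hxdef
  set e := Real.exp (-x) with hedef
  field_simp
  ring
end

section
/- Let k₁ ≥ 1 and k₂ ≥ 2 be integers, and define, for p ∈ (0,1], O₁(p) = p · Σ_{i=0}^{2k₁−1} C(2k₁+2k₂−1, 2k₂+i) p^{2k₂+i} (1−p)^{2k₁−1−i}, O₂(p) = p · Σ_{i=0}^{k₁−1} C(k₁+k₂−1, k₂+i) p^{k₂+i} (1−p)^{k₁−1−i}, and O_GNC(p) = (1−p)·O₁(p) + p·O₂(p). Then lim_{p → 0⁺} O_GNC(p)/p^{k₂+2} = C(k₁+k₂−1, k₂); i.e., for the two-source GNC scheme with intersource channels subject to outage, the high-SNR outage probability is approximately C(k₁+k₂−1, k₂)·[1 − e^{−(2^{R/R_GNC}−1)/γ}]^{2+k₂}, achieving diversity order M + k₂ = 2 + k₂. -/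
open Real Filter Topology Finset

/-- For the two-source GNC scheme with intersource channels subject to outage, the
high-SNR outage probability is `O_GNC(p) ≈ C(k₁+k₂-1, k₂) p^{k₂+2}` as `p → 0⁺`,
achieving diversity order `2 + k₂`. -/
theorem gnc_outage_with_intersource (k₁ k₂ : ℕ) (hk₁ : 1 ≤ k₁) (hk₂ : 2 ≤ k₂)
    (O₁ O₂ OGNC : ℝ → ℝ)
    (hO₁ : ∀ p : ℝ, O₁ p = p * ∑ i ∈ Finset.range (2 * k₁),
        ((2 * k₁ + 2 * k₂ - 1).choose (2 * k₂ + i) : ℝ) * p ^ (2 * k₂ + i) *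
          (1 - p) ^ (2 * k₁ - 1 - i))
    (hO₂ : ∀ p : ℝ, O₂ p = p * ∑ i ∈ Finset.range k₁,
        ((k₁ + k₂ - 1).choose (k₂ + i) : ℝ) * p ^ (k₂ + i) * (1 - p) ^ (k₁ - 1 - i))
    (hOGNC : ∀ p : ℝ, OGNC p = (1 - p) * O₁ p + p * O₂ p) :
    Tendsto (fun p : ℝ => OGNC p / p ^ (k₂ + 2)) (𝓝[>] (0:ℝ))
      (𝓝 ((k₁ + k₂ - 1).choose k₂ : ℝ)) := by
  set S₁ : ℝ → ℝ := fun p => ∑ i ∈ Finset.range (2 * k₁),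
      ((2 * k₁ + 2 * k₂ - 1).choose (2 * k₂ + i) : ℝ) * p ^ (k₂ + i - 1) *
        (1 - p) ^ (2 * k₁ - 1 - i) with hS₁
  set S₂ : ℝ → ℝ := fun p => ∑ i ∈ Finset.range k₁,
      ((k₁ + k₂ - 1).choose (k₂ + i) : ℝ) * p ^ i * (1 - p) ^ (k₁ - 1 - i) with hS₂
  set g : ℝ → ℝ := fun p => (1 - p) * S₁ p + S₂ p with hg
  have e1 : ∀ p : ℝ, O₁ p = p ^ (k₂ + 2) * S₁ p := by
    intro p
    rw [hO₁]
    simp only [hS₁, Finset.mul_sum]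
    apply Finset.sum_congr rfl
    intro i _
    rw [show 2 * k₂ + i = (k₂ + i - 1) + (k₂ + 1) from by omega, pow_add]
    ring
  have e2 : ∀ p : ℝ, O₂ p = p ^ (k₂ + 1) * S₂ p := by
    intro p
    rw [hO₂]
    simp only [hS₂, Finset.mul_sum]
    apply Finset.sum_congr rfl
    intro i _
    rw [show k₂ + i = i + k₂ from by omega, pow_add]
    ring
  have hform : ∀ p : ℝ, OGNC p = p ^ (k₂ + 2) * g p := by
    intro p
    rw [hOGNC, e1, e2]
    simp only [hg]
    ring
  have heq : (fun p : ℝ => OGNC p / p ^ (k₂ + 2)) =ᶠ[𝓝[>] (0:ℝ)] g := by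
    filter_upwards [self_mem_nhdsWithin] with p hp
    have hp0 : (p : ℝ) ^ (k₂ + 2) ≠ 0 := pow_ne_zero _ (ne_of_gt hp)
    rw [hform p, mul_div_cancel_left₀ _ hp0]
  have hc1 : Continuous S₁ := by
    rw [hS₁]
    exact continuous_finset_sum _ fun i _ => by fun_prop
  have hc2 : Continuous S₂ := by
    rw [hS₂]
    exact continuous_finset_sum _ fun i _ => by fun_prop
  have hcont : Continuous g := by
    rw [hg]
    exact (((continuous_const.sub continuous_id).mul hc1).add hc2)
  have hS₁0 : S₁ 0 = 0 := by
    simp only [hS₁]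
    apply Finset.sum_eq_zero
    intro i _
    rw [zero_pow (by omega)]
    ring
  have hS₂0 : S₂ 0 = ((k₁ + k₂ - 1).choose k₂ : ℝ) := by
    simp only [hS₂]
    rw [Finset.sum_eq_single_of_mem 0 (Finset.mem_range.mpr (by omega))]
    · simp
    · intro i _ hi
      rw [zero_pow hi]
      ring
  have hg0 : g 0 = ((k₁ + k₂ - 1).choose k₂ : ℝ) := by
    simp only [hg, hS₁0, hS₂0]
    ring
  have := hcont.tendsto 0
  rw [hg0] at this
  exact Tendsto.congr' heq.symm (this.mono_left nhdsWithin_le_nhds)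
end
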